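/- Let A, B be n-dimensional K-subspaces of L with 1 ∉ B. If every intermediate sub-division-ring M with K ⊊ M ⊆ L satisfies dim_K M > n, then A is matched to B. -/

import Mathlib

open Module Submodule

section Helpers
variable {K L : Type*} [Field K] [DivisionRing L] [Algebra K L]

noncomputable def mulRightE (e : L) (he : e ≠ 0) : L ≃ₗ[K] L where
  toFun x := x * e
  map_add' x y := add_mul x y e
  map_smul' k x := smul_mul_assoc k x e
  invFun x := x * e⁻¹
  left_inv x := by show x * e * e⁻¹ = x; rw [mul_assoc, mul_inv_cancel₀ he, mul_one]
  right_inv x := by show x * e⁻¹ * e = x; rw [mul_assoc, inv_mul_cancel₀ he, mul_one]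

noncomputable def mulLeftE (e : L) (he : e ≠ 0) : L ≃ₗ[K] L where
  toFun x := e * x
  map_add' x y := mul_add e x y
  map_smul' k x := mul_smul_comm k e x
  invFun x := e⁻¹ * x
  left_inv x := by show e⁻¹ * (e * x) = x; rw [← mul_assoc, inv_mul_cancel₀ he, one_mul]
  right_inv x := by show e * (e⁻¹ * x) = x; rw [← mul_assoc, mul_inv_cancel₀ he, one_mul]

lemma mul_span_singleton_eq_map (V : Submodule K L) (e : L) (he : e ≠ 0) :
    V * span K {e} = V.map (mulRightE e he).toLinearMap := by
  ext x; rw [Submodule.mem_mul_span_singleton, Submodule.mem_map]; rfl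

lemma span_singleton_mul_eq_map (W : Submodule K L) (e : L) (he : e ≠ 0) :
    span K {e} * W = W.map (mulLeftE e he).toLinearMap := by
  ext x; rw [Submodule.mem_span_singleton_mul, Submodule.mem_map]; rfl

lemma finrank_mul_span_singleton (V : Submodule K L) (e : L) (he : e ≠ 0) :
    finrank K (V * span K {e} : Submodule K L) = finrank K V := by
  rw [mul_span_singleton_eq_map V e he]; exact LinearEquiv.finrank_map_eq _ _

lemma finrank_span_singleton_mul' (W : Submodule K L) (e : L) (he : e ≠ 0) :
    finrank K (span K {e} * W : Submodule K L) = finrank K W := by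
  rw [span_singleton_mul_eq_map W e he]; exact LinearEquiv.finrank_map_eq _ _

lemma fd_mul (V W : Submodule K L) (hV : FiniteDimensional K V) (hW : FiniteDimensional K W) :
    FiniteDimensional K (V * W : Submodule K L) :=
  Module.Finite.iff_fg.mpr (Submodule.FG.mul (Module.Finite.iff_fg.mp hV) (Module.Finite.iff_fg.mp hW))

lemma left_stab_trivial {n : ℕ}
    (hM : ∀ M : Subalgebra K L, (∀ x ∈ M, x⁻¹ ∈ M) → M ≠ ⊥ → (n : Cardinal) < Module.rank K M)
    (W : Submodule K L) (hfW : FiniteDimensional K W) (hW : W ≠ ⊥) (hWn : finrank K W ≤ n)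
    (e : L) (he : ∀ w ∈ W, e * w ∈ W) : ∃ k : K, algebraMap K L k = e := by
  set M : Subalgebra K L :=
    { carrier := {x | ∀ w ∈ W, x * w ∈ W}
      mul_mem' := fun {x y} hx hy w hw => by rw [mul_assoc]; exact hx _ (hy w hw)
      add_mem' := fun {x y} hx hy w hw => by
        rw [add_mul]; exact W.add_mem (hx w hw) (hy w hw)
      one_mem' := fun w hw => by rwa [one_mul]
      algebraMap_mem' := fun k w hw => by
        rw [← Algebra.smul_def]; exact W.smul_mem k hw } with hMdef
  have heM : e ∈ M := he
  by_contra hcon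
  push_neg at hcon
  have hMne : M ≠ ⊥ := by
    intro hbot
    rw [hbot, Algebra.mem_bot] at heM
    obtain ⟨k, hk⟩ := heM
    exact hcon k hk
  have hinv : ∀ x ∈ M, x⁻¹ ∈ M := by
    intro x hx
    rcases eq_or_ne x 0 with rfl | hx0
    · simpa [inv_zero] using (by intro w hw; rw [zero_mul]; exact W.zero_mem : (0:L) ∈ M)
    · set φ : W →ₗ[K] W :=
        { toFun := fun w => ⟨x * w.1, hx w.1 w.2⟩
          map_add' := fun a b => by ext; exact mul_add x a.1 b.1
          map_smul' := fun k a => by ext; exact mul_smul_comm k x a.1 } with hφ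
      have hinj : Function.Injective φ := by
        intro a b hab
        have : x * a.1 = x * b.1 := congrArg Subtype.val hab
        ext
        exact mul_left_cancel₀ hx0 this
      have hsurj := (LinearMap.injective_iff_surjective (f := φ)).mp hinj
      intro w hw
      obtain ⟨w', hw'⟩ := hsurj ⟨w, hw⟩
      have h1 : x * w'.1 = w := congrArg Subtype.val hw'
      have h2 : x⁻¹ * w = w'.1 := by rw [← h1, inv_mul_cancel_left₀ hx0]
      rw [h2]; exact w'.2
  have hrank := hM M hinv hMne
  obtain ⟨w₀, hw₀W, hw₀⟩ := Submodule.exists_mem_ne_zero_of_ne_bot hW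
  set ψ : M →ₗ[K] W :=
    { toFun := fun m => ⟨m.1 * w₀, m.2 w₀ hw₀W⟩
      map_add' := fun a b => by ext; exact add_mul a.1 b.1 w₀
      map_smul' := fun k a => by ext; exact smul_mul_assoc k a.1 w₀ } with hψ
  have hinjψ : Function.Injective ψ := by
    intro a b hab
    have h1 : a.1 * w₀ = b.1 * w₀ := congrArg Subtype.val hab
    ext
    exact mul_right_cancel₀ hw₀ h1
  have h2 : Module.rank K M ≤ Module.rank K W := LinearMap.rank_le_of_injective ψ hinjψ
  rw [← Module.finrank_eq_rank K W] at h2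
  have h3 : (n : Cardinal) < (finrank K W : Cardinal) := lt_of_lt_of_le hrank h2
  rw [Nat.cast_lt] at h3
  omega

/-- Linear Cauchy–Davenport: core induction. -/
lemma coreCD {n : ℕ}
    (hM : ∀ M : Subalgebra K L, (∀ x ∈ M, x⁻¹ ∈ M) → M ≠ ⊥ → (n : Cardinal) < Module.rank K M) :
    ∀ (m : ℕ) (V W : Submodule K L), FiniteDimensional K V → FiniteDimensional K W →
      V ≠ ⊥ → (1:L) ∈ W →
      finrank K (V * W : Submodule K L) ≤ n →
      (2*n + 2 - (finrank K V + finrank K W)) * (2*n + 2) + finrank K W ≤ m →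
      finrank K V + finrank K W ≤ finrank K (V * W : Submodule K L) + 1 := by
  intro m
  induction m using Nat.strong_induction_on with
  | _ m IH =>
  intro V W hfV hfW hVne h1W hn hμ
  haveI := hfV; haveI := hfW
  haveI hfVW : FiniteDimensional K (V * W : Submodule K L) := fd_mul V W hfV hfW
  obtain ⟨v₀, hv₀V, hv₀⟩ := Submodule.exists_mem_ne_zero_of_ne_bot hVne
  have hVle : V ≤ V * W := by
    intro x hx
    simpa using Submodule.mul_mem_mul hx h1W
  have hVp : finrank K V ≤ finrank K (V * W : Submodule K L) := Submodule.finrank_mono hVle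
  have hsingle : ∀ x ∈ V, x ≠ 0 → span K {x} * W ≤ V * W := by
    intro x hx _
    exact mul_le_mul_left ((span_le).mpr (Set.singleton_subset_iff.mpr hx)) _
  have hWp : finrank K W ≤ finrank K (V * W : Submodule K L) := by
    rw [← finrank_span_singleton_mul' W v₀ hv₀]
    haveI : FiniteDimensional K (span K {v₀} * W : Submodule K L) :=
      fd_mul _ W inferInstance hfW
    exact Submodule.finrank_mono (hsingle v₀ hv₀V hv₀)
  -- trivial small cases
  rcases Nat.lt_or_ge (finrank K V) 2 with hV2 | hV2
  · -- finrank V = 1 (0 impossible)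
    have hV0 : finrank K V ≠ 0 := by
      intro h
      exact hVne ((Submodule.finrank_eq_zero).mp h)
    have hV1 : finrank K V = 1 := by omega
    have hVeq : span K {v₀} = V := by
      apply Submodule.eq_of_le_of_finrank_le ((span_le).mpr (Set.singleton_subset_iff.mpr hv₀V))
      rw [hV1, finrank_span_singleton hv₀]
    rw [← hVeq, finrank_span_singleton hv₀, finrank_span_singleton_mul' W v₀ hv₀]
    omega
  rcases Nat.lt_or_ge (finrank K W) 2 with hW2 | hW2
  · have h10 : (1:L) ≠ 0 := one_ne_zero
    have hW1 : finrank K W = 1 := by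
      have : finrank K (span K {(1:L)}) ≤ finrank K W :=
        Submodule.finrank_mono ((span_le).mpr (Set.singleton_subset_iff.mpr h1W))
      rw [finrank_span_singleton h10] at this
      omega
    have hWeq : span K {(1:L)} = W := by
      apply Submodule.eq_of_le_of_finrank_le ((span_le).mpr (Set.singleton_subset_iff.mpr h1W))
      rw [hW1, finrank_span_singleton h10]
    have : V * W = V := by rw [← hWeq, ← Submodule.one_eq_span, mul_one]
    rw [this, hW1]
  · -- main case
    by_cases hex : ∃ v ∈ V, ∃ e ∈ W, v ≠ 0 ∧ v * e ∈ V ∧ ∀ k : K, algebraMap K L k ≠ e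
    case neg =>
      push_neg at hex
      have hinf : V ⊓ (span K {v₀} * W) = span K {v₀} := by
        apply le_antisymm
        · intro x hx
          obtain ⟨hxV, hxvW⟩ := Submodule.mem_inf.mp hx
          rw [Submodule.mem_span_singleton_mul] at hxvW
          obtain ⟨z, hzW, hzx⟩ := hxvW
          rcases eq_or_ne x 0 with rfl | hx0
          · exact Submodule.zero_mem _
          · have hz0 : v₀ * z ∈ V := by rw [hzx]; exact hxV
            obtain ⟨k, hk⟩ := hex v₀ hv₀V z hzW hv₀ hz0
            rw [Submodule.mem_span_singleton]
            exact ⟨k, by rw [Algebra.smul_def, ← hzx, ← hk]; exact Algebra.commutes k v₀⟩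
        · apply (span_le).mpr
          rw [Set.singleton_subset_iff]
          exact Submodule.mem_inf.mpr ⟨hv₀V, Submodule.mem_span_singleton_mul.mpr ⟨1, h1W, mul_one v₀⟩⟩
      haveI hfvW : FiniteDimensional K (span K {v₀} * W : Submodule K L) :=
        fd_mul _ W inferInstance hfW
      have hsum := Submodule.finrank_sup_add_finrank_inf_eq V (span K {v₀} * W)
      rw [hinf, finrank_span_singleton hv₀, finrank_span_singleton_mul' W v₀ hv₀] at hsum
      have hsuple : V ⊔ (span K {v₀} * W) ≤ V * W := sup_le hVle (hsingle v₀ hv₀V hv₀)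
      have := Submodule.finrank_mono hsuple
      omega
    case pos =>
      obtain ⟨v, hvV, e, heW, hv0, hveV, heK⟩ := hex
      have he0 : e ≠ 0 := fun h => heK 0 (by rw [map_zero, h])
      set Ve := V * span K {e} with hVe
      set iW := span K {e⁻¹} * W with hiW
      haveI hfVe : FiniteDimensional K Ve := fd_mul _ _ hfV inferInstance
      haveI hfiW : FiniteDimensional K iW := fd_mul _ _ inferInstance hfW
      set V1 := V ⊓ Ve with hV1
      set V2 := V ⊔ Ve with hV2d
      set W1 := W ⊔ iW with hW1
      set W2 := W ⊓ iW with hW2d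
      haveI : FiniteDimensional K V1 := inferInstance
      haveI : FiniteDimensional K V2 := inferInstance
      haveI : FiniteDimensional K W1 := inferInstance
      haveI : FiniteDimensional K W2 := inferInstance
      -- products are contained in V*W
      have hP1 : V1 * W1 ≤ V * W := by
        rw [hW1, Submodule.mul_sup]
        apply sup_le
        · exact mul_le_mul_left inf_le_left _
        · rw [Submodule.mul_le]
          intro x hx y hy
          have hxVe : x ∈ Ve := (Submodule.mem_inf.mp hx).2
          rw [hVe, Submodule.mem_mul_span_singleton] at hxVe
          obtain ⟨z, hzV, hz⟩ := hxVe
          rw [hiW, Submodule.mem_span_singleton_mul] at hy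
          obtain ⟨w, hwW, hw⟩ := hy
          have : x * y = z * w := by
            rw [← hz, ← hw, mul_assoc, mul_inv_cancel_left₀ he0]
          rw [this]
          exact Submodule.mul_mem_mul hzV hwW
      have hP2 : V2 * W2 ≤ V * W := by
        rw [hV2d, Submodule.sup_mul]
        apply sup_le
        · exact mul_le_mul_right inf_le_left _
        · rw [Submodule.mul_le]
          intro x hx y hy
          rw [hVe, Submodule.mem_mul_span_singleton] at hx
          obtain ⟨z, hzV, hz⟩ := hx
          have hyiW : y ∈ iW := (Submodule.mem_inf.mp hy).2
          rw [hiW, Submodule.mem_span_singleton_mul] at hyiW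
          obtain ⟨w, hwW, hw⟩ := hyiW
          have : x * y = z * w := by
            rw [← hz, ← hw, mul_assoc, mul_inv_cancel_left₀ he0]
          rw [this]
          exact Submodule.mul_mem_mul hzV hwW
      -- dimension identities
      have h2V : finrank K V1 + finrank K V2 = 2 * finrank K V := by
        have hid := Submodule.finrank_sup_add_finrank_inf_eq V Ve
        rw [← hV1, ← hV2d] at hid
        have hVeV : finrank K Ve = finrank K V := by
          rw [hVe]; exact finrank_mul_span_singleton V e he0
        omega
      have h2W : finrank K W1 + finrank K W2 = 2 * finrank K W := by
        have hid := Submodule.finrank_sup_add_finrank_inf_eq W iW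
        rw [← hW1, ← hW2d] at hid
        have hiWW : finrank K iW = finrank K W := by
          rw [hiW]; exact finrank_span_singleton_mul' W e⁻¹ (inv_ne_zero he0)
        omega
      -- memberships
      have hveV1 : v * e ∈ V1 := by
        refine Submodule.mem_inf.mpr ⟨hveV, ?_⟩
        rw [hVe, Submodule.mem_mul_span_singleton]
        exact ⟨v, hvV, rfl⟩
      have hV1ne : V1 ≠ ⊥ := by
        intro h
        rw [h, Submodule.mem_bot] at hveV1
        exact (mul_ne_zero hv0 he0) hveV1
      have h1W2 : (1:L) ∈ W2 := by
        refine Submodule.mem_inf.mpr ⟨h1W, ?_⟩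
        rw [hiW, Submodule.mem_span_singleton_mul]
        exact ⟨e, heW, inv_mul_cancel₀ he0⟩
      have h1W1 : (1:L) ∈ W1 := (le_sup_left : W ≤ W1) h1W
      have hV2ne : V2 ≠ ⊥ := by
        intro h
        have := (le_sup_left : V ≤ V2).trans_eq h
        exact hVne (le_bot_iff.mp this)
      -- strict decrease of W2
      have hW2lt : finrank K W2 < finrank K W := by
        rcases Nat.lt_or_ge (finrank K W2) (finrank K W) with h | h
        · exact h
        · exfalso
          have hW2W : W2 = W := Submodule.eq_of_le_of_finrank_le inf_le_left h
          have hstab : ∀ w ∈ W, e * w ∈ W := by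
            intro w hw
            have hwW2 : w ∈ W2 := by rw [hW2W]; exact hw
            have : w ∈ iW := (Submodule.mem_inf.mp hwW2).2
            rw [hiW, Submodule.mem_span_singleton_mul] at this
            obtain ⟨z, hzW, hz⟩ := this
            rw [← hz, mul_inv_cancel_left₀ he0]
            exact hzW
          have hWne : W ≠ ⊥ := fun h => by rw [h, Submodule.mem_bot] at h1W; exact one_ne_zero h1W
          obtain ⟨k, hk⟩ := left_stab_trivial hM W hfW hWne (hWp.trans hn) e hstab
          exact heK k hk
      -- bounds
      have hW1n : finrank K W1 ≤ n := by
        have hle : span K {v * e} * W1 ≤ V1 * W1 :=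
          mul_le_mul_left ((span_le).mpr (Set.singleton_subset_iff.mpr hveV1)) _
        haveI : FiniteDimensional K (V1 * W1 : Submodule K L) := fd_mul _ _ inferInstance inferInstance
        have := Submodule.finrank_mono (hle.trans hP1)
        rw [finrank_span_singleton_mul' W1 (v*e) (mul_ne_zero hv0 he0)] at this
        exact this.trans hn
      set s := finrank K V + finrank K W with hs_def
      set s1 := finrank K V1 + finrank K W1 with hs1_def
      set s2 := finrank K V2 + finrank K W2 with hs2_def
      have h_id : s1 + s2 = 2 * s := by omega
      have hs2n : s ≤ 2*n := by omega
      haveI : FiniteDimensional K (V1 * W1 : Submodule K L) := fd_mul _ _ inferInstance inferInstance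
      haveI : FiniteDimensional K (V2 * W2 : Submodule K L) := fd_mul _ _ inferInstance inferInstance
      have hP1n : finrank K (V1 * W1 : Submodule K L) ≤ finrank K (V * W : Submodule K L) :=
        Submodule.finrank_mono hP1
      have hP2n : finrank K (V2 * W2 : Submodule K L) ≤ finrank K (V * W : Submodule K L) :=
        Submodule.finrank_mono hP2
      by_cases hc : s ≤ s2
      · -- recurse on pair 2
        have hμ2 : (2*n + 2 - s2) * (2*n + 2) + finrank K W2 < m := by
          have hmul : (2*n + 2 - s2) * (2*n+2) ≤ (2*n + 2 - s) * (2*n+2) :=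
            Nat.mul_le_mul_right _ (by omega)
          omega
        have := IH _ hμ2 V2 W2 inferInstance inferInstance hV2ne h1W2 (hP2n.trans hn) le_rfl
        omega
      · -- recurse on pair 1
        have hs1 : s + 1 ≤ s1 := by omega
        have hμ1 : (2*n + 2 - s1) * (2*n + 2) + finrank K W1 < m := by
          have h1 : (2*n + 2 - s1) + 1 ≤ 2*n + 2 - s := by omega
          have hmul : ((2*n + 2 - s1) + 1) * (2*n+2) ≤ (2*n + 2 - s) * (2*n+2) :=
            Nat.mul_le_mul_right _ h1
          have hexp : ((2*n + 2 - s1) + 1) * (2*n+2) = (2*n + 2 - s1) * (2*n+2) + (2*n+2) := by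
            ring
          omega
        have := IH _ hμ1 V1 W1 inferInstance inferInstance hV1ne h1W1 (hP1n.trans hn) le_rfl
        omega

end Helpers

section Rado
universe v
variable {K : Type*} [Field K] {V : Type v} [AddCommGroup V] [Module K V]

lemma finrank_map_mkQ_add (X Y : Submodule K V) [FiniteDimensional K V] :
    finrank K (Y.map X.mkQ) + finrank K X = finrank K (Y ⊔ X : Submodule K V) := by
  have hXmap : X.map X.mkQ = ⊥ := by
    rw [eq_bot_iff, Submodule.map_le_iff_le_comap, Submodule.comap_bot, Submodule.ker_mkQ]
  have hmapeq : Y.map X.mkQ = (Y ⊔ X).map X.mkQ := by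
    rw [Submodule.map_sup, hXmap, sup_bot_eq]
  set φ : (Y ⊔ X : Submodule K V) →ₗ[K] V ⧸ X := X.mkQ.comp (Y ⊔ X).subtype with hφ
  have hrange : LinearMap.range φ = (Y ⊔ X).map X.mkQ := by
    rw [hφ, LinearMap.range_comp, Submodule.range_subtype]
  have hker : LinearMap.ker φ = X.comap (Y ⊔ X).subtype := by
    rw [hφ, LinearMap.ker_comp, Submodule.ker_mkQ]
  have hrn := LinearMap.finrank_range_add_finrank_ker φ
  rw [hrange, hker] at hrn
  have hkerfr : finrank K (X.comap (Y ⊔ X).subtype) = finrank K X :=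
    (Submodule.comapSubtypeEquivOfLe le_sup_right).finrank_eq
  rw [hkerfr] at hrn
  rw [hmapeq]
  exact hrn

/-- Rado's theorem for vector spaces: if every finite subfamily of subspaces `U i` spans
a subspace of dimension at least the size of the subfamily, then one can pick linearly
independent representatives. -/
lemma rado :
    ∀ (c : ℕ) (W : Type v) [AddCommGroup W] [Module K W] [FiniteDimensional K W]
      (ι : Type) [Fintype ι] [DecidableEq ι] (U : ι → Submodule K W),
      Fintype.card ι ≤ c →
      (∀ S : Finset ι, S.card ≤ finrank K (S.sup U : Submodule K W)) →
      ∃ f : ι → W, (∀ i, f i ∈ U i) ∧ LinearIndependent K f := by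
  intro c
  induction c with
  | zero =>
    intro W _ _ _ ι _ _ U hc _
    haveI : IsEmpty ι := Fintype.card_eq_zero_iff.mp (Nat.le_zero.mp hc)
    exact ⟨fun i => 0, fun i => (IsEmpty.false i).elim, linearIndependent_empty_type⟩
  | succ c IHc =>
    intro W _ _ _ ι _ _ U hc h
    rcases isEmpty_or_nonempty ι with hι | hι
    · exact ⟨fun i => 0, fun i => (IsEmpty.false i).elim, linearIndependent_empty_type⟩
    by_cases hcrit : ∃ S : Finset ι, S.Nonempty ∧ S ≠ Finset.univ ∧
        finrank K (S.sup U : Submodule K W) = S.card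
    · -- critical set case
      obtain ⟨S, hSne, hSuniv, hScard⟩ := hcrit
      set X : Submodule K W := S.sup U with hX
      -- part 1 : family restricted to S
      have hcard1 : Fintype.card {i // i ∈ S} ≤ c := by
        rw [Fintype.card_coe]
        have : S.card < Fintype.card ι := by
          have h4 := Finset.card_lt_card (Finset.ssubset_univ_iff.mpr hSuniv)
          simpa [Finset.card_univ] using h4
        omega
      have h1 : ∀ T : Finset {i // i ∈ S},
          T.card ≤ finrank K (T.sup (fun j => U j.1) : Submodule K W) := by
        intro T
        have himg : (T.image Subtype.val).sup U = T.sup (fun j => U j.1) := by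
          rw [Finset.sup_image]; rfl
        have := h (T.image Subtype.val)
        rw [himg, Finset.card_image_of_injective _ Subtype.val_injective] at this
        exact this
      obtain ⟨f₁, hf₁mem, hf₁ind⟩ := IHc W {i // i ∈ S} (fun j => U j.1) hcard1 h1
      -- part 2 : family on the complement, quotiented by X
      have hcard2 : Fintype.card {i // i ∉ S} ≤ c := by
        have h2 := Fintype.card_subtype_compl (p := fun i => i ∈ S)
        have h2b : Fintype.card {i // i ∈ S} = S.card := Fintype.card_coe S
        have h3 : 1 ≤ S.card := Finset.card_pos.mpr hSne
        have h4 : S.card ≤ Fintype.card ι := by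
          simpa [Finset.card_univ] using Finset.card_le_card (Finset.subset_univ S)
        omega
      have h2 : ∀ T : Finset {i // i ∉ S},
          T.card ≤ finrank K (T.sup (fun j => (U j.1).map X.mkQ) : Submodule K (W ⧸ X)) := by
        intro T
        set T' : Finset ι := T.image Subtype.val with hT'
        have hdisj : Disjoint T' S := by
          rw [Finset.disjoint_left]
          rintro a ha haS
          obtain ⟨b, _, rfl⟩ := Finset.mem_image.mp ha
          exact b.2 haS
        have himg : T.sup (fun j => (U j.1).map X.mkQ) = (T'.sup U).map X.mkQ := by
          rw [hT', Finset.sup_image]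
          rw [Finset.sup_eq_iSup, Finset.sup_eq_iSup, Submodule.map_iSup]
          congr 1
          ext j
          rw [Submodule.map_iSup]
          rfl
        have hrk := finrank_map_mkQ_add X (T'.sup U)
        have hsup : (T'.sup U) ⊔ X = (T' ∪ S).sup U := by
          rw [Finset.sup_union, hX]
        have hbig := h (T' ∪ S)
        rw [Finset.card_union_of_disjoint hdisj, ← hsup] at hbig
        have hTcard : T'.card = T.card := Finset.card_image_of_injective _ Subtype.val_injective
        rw [himg]
        omega
      obtain ⟨g, hgmem, hgind⟩ := IHc (W ⧸ X) {i // i ∉ S} (fun j => (U j.1).map X.mkQ) hcard2 h2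
      -- lift g
      have hlift : ∀ j : {i // i ∉ S}, ∃ y, y ∈ U j.1 ∧ X.mkQ y = g j := by
        intro j
        exact Submodule.mem_map.mp (hgmem j)
      choose g2 hg2mem hg2π using hlift
      -- f₁ lands in X
      have hf₁X : ∀ j : {i // i ∈ S}, f₁ j ∈ X := fun j =>
        (Finset.le_sup (f := U) j.2 : U j.1 ≤ X) (hf₁mem j)
      set f₁' : {i // i ∈ S} → X := fun j => ⟨f₁ j, hf₁X j⟩ with hf₁'
      have hf₁'ind : LinearIndependent K f₁' := by
        apply LinearIndependent.of_comp X.subtype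
        convert hf₁ind
        rfl
      have hgind' : LinearIndependent K (Submodule.Quotient.mk (p := X) ∘ g2) := by
        have : (Submodule.Quotient.mk (p := X)) ∘ g2 = g := by
          funext j; exact hg2π j
        rw [this]; exact hgind
      have hsum := LinearIndependent.sumElim_of_quotient hf₁'ind g2 hgind'
      -- assemble
      set σ : ι → Sum {i // i ∈ S} {i // i ∉ S} := fun i =>
        if h : i ∈ S then Sum.inl ⟨i, h⟩ else Sum.inr ⟨i, h⟩ with hσ
      have hσinj : Function.Injective σ := by
        intro a b hab
        rw [hσ] at hab
        by_cases ha : a ∈ S <;> by_cases hb : b ∈ S <;> simp [ha, hb] at hab <;> exact hab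
      have hind := hsum.comp σ hσinj
      refine ⟨(Sum.elim (fun a => (f₁' a : W)) g2) ∘ σ, ?_, hind⟩
      intro i
      rw [hσ]
      by_cases hi : i ∈ S
      · simp only [Function.comp_apply, dif_pos hi, Sum.elim_inl]
        exact hf₁mem ⟨i, hi⟩
      · simp only [Function.comp_apply, dif_neg hi, Sum.elim_inr]
        exact hg2mem ⟨i, hi⟩
    · -- no critical set: pick any nonzero x in U i₀ and quotient by its span
      push_neg at hcrit
      obtain ⟨i₀⟩ := hι
      have hU₀ : 1 ≤ finrank K (U i₀) := by
        have := h {i₀}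
        rwa [Finset.sup_singleton, Finset.card_singleton] at this
      have hU₀ne : U i₀ ≠ ⊥ := by
        intro hbot
        rw [hbot] at hU₀
        simp [finrank_bot] at hU₀
      obtain ⟨x, hxU, hx0⟩ := Submodule.exists_mem_ne_zero_of_ne_bot hU₀ne
      set X : Submodule K W := Submodule.span K {x} with hX
      have hXrank : finrank K X = 1 := finrank_span_singleton hx0
      have hcard2 : Fintype.card {i // i ≠ i₀} ≤ c := by
        rw [Fintype.card_subtype_compl]
        have h1 : 1 ≤ Fintype.card ι := Fintype.card_pos_iff.mpr ⟨i₀⟩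
        have h2 : Fintype.card {i // i = i₀} = 1 := by
          simp [Fintype.card_subtype_eq]
        omega
      have h2 : ∀ T : Finset {i // i ≠ i₀},
          T.card ≤ finrank K (T.sup (fun j => (U j.1).map X.mkQ) : Submodule K (W ⧸ X)) := by
        intro T
        rcases T.eq_empty_or_nonempty with rfl | hTne
        · simp
        set T' : Finset ι := T.image Subtype.val with hT'
        have himg : T.sup (fun j => (U j.1).map X.mkQ) = (T'.sup U).map X.mkQ := by
          rw [hT', Finset.sup_image]
          rw [Finset.sup_eq_iSup, Finset.sup_eq_iSup, Submodule.map_iSup]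
          congr 1
          ext j
          rw [Submodule.map_iSup]
          rfl
        have hrk := finrank_map_mkQ_add X (T'.sup U)
        have hT'ne : T'.Nonempty := hTne.image _
        have hT'univ : T' ≠ Finset.univ := by
          intro habs
          have : i₀ ∈ T' := habs ▸ Finset.mem_univ i₀
          obtain ⟨b, _, hb⟩ := Finset.mem_image.mp this
          exact b.2 hb
        have hstrict : T'.card + 1 ≤ finrank K (T'.sup U : Submodule K W) := by
          have hge := h T'
          have hne := hcrit T' hT'ne hT'univ
          omega
        have hTcard : T'.card = T.card := Finset.card_image_of_injective _ Subtype.val_injective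
        have hle : finrank K (T'.sup U : Submodule K W)
            ≤ finrank K ((T'.sup U) ⊔ X : Submodule K W) :=
          Submodule.finrank_mono le_sup_left
        rw [himg]
        omega
      obtain ⟨g, hgmem, hgind⟩ := IHc (W ⧸ X) {i // i ≠ i₀} (fun j => (U j.1).map X.mkQ) hcard2 h2
      have hlift : ∀ j : {i // i ≠ i₀}, ∃ y, y ∈ U j.1 ∧ X.mkQ y = g j := fun j =>
        Submodule.mem_map.mp (hgmem j)
      choose g2 hg2mem hg2π using hlift
      have hxX : x ∈ X := Submodule.mem_span_singleton_self x
      set f₁' : PUnit.{1} → X := fun _ => ⟨x, hxX⟩ with hf₁'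
      have hf₁'ind : LinearIndependent K f₁' := by
        apply linearIndependent_unique_iff.mpr
        intro habs
        apply hx0
        exact congrArg Subtype.val habs
      have hgind' : LinearIndependent K (Submodule.Quotient.mk (p := X) ∘ g2) := by
        have : (Submodule.Quotient.mk (p := X)) ∘ g2 = g := by
          funext j; exact hg2π j
        rw [this]; exact hgind
      have hsum := LinearIndependent.sumElim_of_quotient hf₁'ind g2 hgind'
      set σ : ι → Sum PUnit.{1} {i // i ≠ i₀} := fun i =>
        if h : i = i₀ then Sum.inl PUnit.unit else Sum.inr ⟨i, h⟩ with hσ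
      have hσinj : Function.Injective σ := by
        intro a b hab
        rw [hσ] at hab
        by_cases ha : a = i₀ <;> by_cases hb : b = i₀ <;> simp [ha, hb] at hab
        · rw [ha, hb]
        · exact hab
      have hind := hsum.comp σ hσinj
      refine ⟨(Sum.elim (fun a => (f₁' a : W)) g2) ∘ σ, ?_, hind⟩
      intro i
      rw [hσ]
      by_cases hi : i = i₀
      · simp only [Function.comp_apply, dif_pos hi, Sum.elim_inl]
        subst hi
        exact hxU
      · simp only [Function.comp_apply, dif_neg hi, Sum.elim_inr]
        exact hg2mem ⟨i, hi⟩

end Rado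

/-- The family `a : Fin n → L` is a basis of the `K`-subspace `A` of `L`. -/
def IsLinBasis (K : Type*) {L : Type*} [Field K] [DivisionRing L] [Algebra K L]
    {n : ℕ} (a : Fin n → L) (A : Submodule K L) : Prop :=
  LinearIndependent K a ∧ Submodule.span K (Set.range a) = A

/-- The basis `a` of `A` is matched to the basis `b` of `B`: for every `i` and every
`x ∈ B`, if `a i * x ∈ A` then `x` lies in the span of `{b j : j ≠ i}`. -/
def MatchedBases (K : Type*) {L : Type*} [Field K] [DivisionRing L] [Algebra K L]
    {n : ℕ} (a b : Fin n → L) (A B : Submodule K L) : Prop :=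
  ∀ i : Fin n, ∀ x ∈ B, a i * x ∈ A → x ∈ Submodule.span K (b '' {j | j ≠ i})

/-- `A` is matched to `B` if every basis of `A` can be matched to some basis of `B`. -/
def SubspaceMatched (K : Type*) {L : Type*} [Field K] [DivisionRing L] [Algebra K L]
    (A B : Submodule K L) : Prop :=
  ∀ (n : ℕ) (a : Fin n → L), IsLinBasis K a A →
    ∃ b : Fin n → L, IsLinBasis K b B ∧ MatchedBases K a b A B

/-- If `A, B` are `n`-dimensional `K`-subspaces of `L` with `1 ∉ B`, and every intermediate
sub-division-ring `K ⊊ M ⊆ L` (a subalgebra closed under inverses, other than `K` itself)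
has `dim_K M > n`, then `A` is matched to `B`. -/
theorem matched_of_small_dim {K L : Type*} [Field K] [DivisionRing L] [Algebra K L]
    {n : ℕ} (A B : Submodule K L) [FiniteDimensional K A] [FiniteDimensional K B]
    (hA : Module.finrank K A = n) (hB : Module.finrank K B = n)
    (h1 : (1 : L) ∉ B)
    (hM : ∀ M : Subalgebra K L, (∀ x ∈ M, x⁻¹ ∈ M) → M ≠ ⊥ →
      (n : Cardinal) < Module.rank K M) :
    SubspaceMatched K A B := by
  have main : ∀ (m : ℕ) (a : Fin m → L),
      (LinearIndependent K a ∧ Submodule.span K (Set.range a) = A) →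
      ∃ b : Fin m → L, (LinearIndependent K b ∧ Submodule.span K (Set.range b) = B) ∧
        (∀ i : Fin m, ∀ x ∈ B, a i * x ∈ A → x ∈ Submodule.span K (b '' {j | j ≠ i})) := by
    intro m a ha
    -- the number of basis elements is n
    have hmn : m = n := by
      have h1' := finrank_span_eq_card ha.1
      rw [ha.2] at h1'
      simp only [Fintype.card_fin] at h1'
      omega
    subst hmn
    rename' m => n
    -- degenerate case n = 0
    rcases Nat.eq_zero_or_pos n with hn0 | hnpos
    · subst hn0
      refine ⟨fun i => 0, ⟨linearIndependent_empty_type, ?_⟩, fun i => (IsEmpty.false i).elim⟩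
      have hBbot : B = ⊥ := Submodule.finrank_eq_zero.mp hB
      rw [hBbot]
      rw [Set.range_eq_empty, Submodule.span_empty]
    -- main case
    classical
    have haA : ∀ i, a i ∈ A := fun i => ha.2 ▸ Submodule.subset_span (Set.mem_range_self i)
    -- the obstruction subspaces
    set Bi : Fin n → Submodule K L :=
      fun i => B ⊓ A.comap (LinearMap.mulLeft K (a i)) with hBi
    have hBiB : ∀ i, Bi i ≤ B := fun i => inf_le_left
    -- key dimension bound
    have hkey : ∀ S : Finset (Fin n), S.Nonempty →
        finrank K (S.inf Bi : Submodule K L) + S.card ≤ n := by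
      intro S hSne
      obtain ⟨i₀, hi₀⟩ := hSne
      set W0 : Submodule K L := S.inf Bi with hW0
      have hW0B : W0 ≤ B := (Finset.inf_le hi₀).trans (hBiB i₀)
      haveI hfW0 : FiniteDimensional K W0 := Submodule.finiteDimensional_of_le hW0B
      set V : Submodule K L := Submodule.span K (a '' S) with hV
      haveI hfV : FiniteDimensional K V :=
        FiniteDimensional.span_of_finite K (S.finite_toSet.image a)
      set U : Submodule K L := Submodule.span K {(1:L)} ⊔ W0 with hU
      haveI hfU : FiniteDimensional K U := inferInstance
      have h1U : (1:L) ∈ U := Submodule.mem_sup_left (Submodule.mem_span_singleton_self (1:L))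
      have hVne : V ≠ ⊥ := by
        intro habs
        have : a i₀ ∈ V := Submodule.subset_span ⟨i₀, hi₀, rfl⟩
        rw [habs, Submodule.mem_bot] at this
        exact ha.1.ne_zero i₀ this
      have hVA : V ≤ A := Submodule.span_le.mpr (by
        rintro x ⟨i, _, rfl⟩
        exact haA i)
      have hprod : V * U ≤ A := by
        rw [hU, Submodule.mul_sup]
        apply sup_le
        · rw [← Submodule.one_eq_span, mul_one]
          exact hVA
        · rw [Submodule.mul_le]
          intro v hv y hy
          have hle : V ≤ A.comap (LinearMap.mulRight K y) := by
            rw [hV, Submodule.span_le]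
            rintro z ⟨i, hiS, rfl⟩
            have hSle : S.inf Bi ≤ Bi i := Finset.inf_le hiS
            exact (Submodule.mem_inf.mp (hSle hy)).2
          exact hle hv
      haveI hfVU : FiniteDimensional K (V * U : Submodule K L) := fd_mul _ _ hfV hfU
      have hVUn : finrank K (V * U : Submodule K L) ≤ n := by
        have := Submodule.finrank_mono hprod
        omega
      have hcore := coreCD hM ((2*n + 2 - (finrank K V + finrank K U)) * (2*n + 2) + finrank K U)
        V U hfV hfU hVne h1U hVUn le_rfl
      -- compute finrank V and finrank U
      have hVrank : finrank K V = S.card := by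
        have hinj : Function.Injective (fun j : {i // i ∈ S} => a j.1) :=
          fun x y hxy => Subtype.ext (ha.1.injective hxy)
        have hli : LinearIndependent K (fun j : {i // i ∈ S} => a j.1) :=
          ha.1.comp Subtype.val Subtype.val_injective
        have hr := finrank_span_eq_card hli
        have : Set.range (fun j : {i // i ∈ S} => a j.1) = a '' S := by
          ext x
          constructor
          · rintro ⟨⟨j, hj⟩, rfl⟩; exact ⟨j, hj, rfl⟩
          · rintro ⟨j, hj, rfl⟩; exact ⟨⟨j, hj⟩, rfl⟩
        rw [this] at hr
        rw [hV, hr, Fintype.card_coe]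
      have hUrank : finrank K U = finrank K W0 + 1 := by
        have hinfbot : Submodule.span K {(1:L)} ⊓ W0 = ⊥ := by
          rw [eq_bot_iff]
          intro x hx
          obtain ⟨hx1, hxW⟩ := Submodule.mem_inf.mp hx
          rw [Submodule.mem_span_singleton] at hx1
          obtain ⟨k, rfl⟩ := hx1
          rcases eq_or_ne k 0 with rfl | hk0
          · simp
          · exfalso
            apply h1
            have : (1:L) = k⁻¹ • (k • (1:L)) := by rw [smul_smul, inv_mul_cancel₀ hk0, one_smul]
            rw [this]
            exact hW0B (W0.smul_mem k⁻¹ hxW)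
        have hsum := Submodule.finrank_sup_add_finrank_inf_eq (Submodule.span K {(1:L)}) W0
        rw [hinfbot, finrank_bot, finrank_span_singleton (one_ne_zero)] at hsum
        rw [hU]
        omega
      omega
    -- pass to the dual space of B and apply Rado's theorem
    set Wb : Fin n → Submodule K B := fun i => (Bi i).comap B.subtype with hWb
    have hcomap : ∀ T : Finset (Fin n),
        (T.inf Wb : Submodule K B) = (T.inf Bi).comap B.subtype := by
      intro T
      induction T using Finset.induction_on with
      | empty => simp
      | insert _ _ hj ih =>
        rw [Finset.inf_insert, Finset.inf_insert, ih, Submodule.comap_inf]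
    have hWbrank : ∀ S : Finset (Fin n), S.Nonempty →
        finrank K (S.inf Wb : Submodule K B) + S.card ≤ n := by
      intro S hSne
      obtain ⟨i₀, hi₀⟩ := hSne
      have hle : S.inf Bi ≤ B := (Finset.inf_le hi₀).trans (hBiB i₀)
      have heq : finrank K (S.inf Wb : Submodule K B) = finrank K (S.inf Bi : Submodule K L) := by
        rw [hcomap]
        exact (Submodule.comapSubtypeEquivOfLe hle).finrank_eq
      rw [heq]
      exact hkey S ⟨i₀, hi₀⟩
    set Ub : Fin n → Submodule K (Module.Dual K B) := fun i => (Wb i).dualAnnihilator with hUb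
    have hsupann : ∀ T : Finset (Fin n),
        (T.sup Ub : Submodule K (Module.Dual K B)) = (T.inf Wb).dualAnnihilator := by
      intro T
      induction T using Finset.induction_on with
      | empty => simp
      | insert _ _ hj ih =>
        rw [Finset.sup_insert, Finset.inf_insert, ih]
        rw [Subspace.dualAnnihilator_inf_eq]
    have hrado : ∀ S : Finset (Fin n),
        S.card ≤ finrank K (S.sup Ub : Submodule K (Module.Dual K B)) := by
      intro S
      rcases S.eq_empty_or_nonempty with rfl | hSne
      · simp
      have hann : finrank K ((S.inf Wb).dualAnnihilator) + finrank K (S.inf Wb : Submodule K B) =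
          n := by
        have hq := Submodule.finrank_quotient_add_finrank (S.inf Wb)
        have he : finrank K (B ⧸ S.inf Wb) = finrank K ((S.inf Wb).dualAnnihilator) :=
          (Subspace.quotEquivAnnihilator (S.inf Wb)).finrank_eq
        omega
      have := hWbrank S hSne
      rw [hsupann]
      omega
    obtain ⟨f, hfmem, hfind⟩ := rado n (Module.Dual K ↥B) (Fin n) Ub (by simp) hrado
    -- build the dual basis
    have hdim : Fintype.card (Fin n) = finrank K (Module.Dual K B) := by
      rw [Subspace.dual_finrank_eq, hB, Fintype.card_fin]
    haveI : Nonempty (Fin n) := ⟨⟨0, hnpos⟩⟩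
    set bF : Basis (Fin n) K (Module.Dual K B) :=
      basisOfLinearIndependentOfCardEqFinrank hfind hdim with hbF
    have hbFf : ⇑bF = f := coe_basisOfLinearIndependentOfCardEqFinrank hfind hdim
    set b' : Basis (Fin n) K B := bF.dualBasis.map (Module.evalEquiv K B).symm with hb'
    have hrepr : ∀ (x : B) (i : Fin n), b'.repr x i = f i x := by
      intro x i
      rw [hb', Basis.map_repr]
      simp only [LinearEquiv.trans_apply, LinearEquiv.symm_symm]
      rw [Basis.dualBasis_repr]
      rw [Module.evalEquiv_apply, Module.Dual.eval_apply]
      rw [← hbFf]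
    -- the matched basis of B
    set b : Fin n → L := fun i => (b' i : L) with hbdef
    have hbind : LinearIndependent K b := by
      have := b'.linearIndependent.map' B.subtype (Submodule.ker_subtype B)
      exact this
    have hbspan : Submodule.span K (Set.range b) = B := by
      have h1' : Set.range b = B.subtype '' Set.range ⇑b' := by
        rw [← Set.range_comp]; rfl
      rw [h1', ← Submodule.map_span, Basis.span_eq, Submodule.map_top, Submodule.range_subtype]
    refine ⟨b, ⟨hbind, hbspan⟩, ?_⟩
    intro i x hxB hax
    set xB : B := ⟨x, hxB⟩ with hxBdef
    have hxW : xB ∈ Wb i := by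
      simp only [hWb, Submodule.mem_comap]
      refine Submodule.mem_inf.mpr ⟨hxB, ?_⟩
      simpa using hax
    have hfi : f i xB = 0 := by
      have := hfmem i
      simp only [hUb] at this
      rw [Submodule.mem_dualAnnihilator] at this
      exact this xB hxW
    have hxspan : xB ∈ Submodule.span K (⇑b' '' {j | j ≠ i}) := by
      rw [Basis.mem_span_image]
      intro j hj
      rw [Finset.mem_coe, Finsupp.mem_support_iff] at hj
      intro hji
      apply hj
      rw [hji, hrepr xB i, hfi]
    have : x ∈ Submodule.map B.subtype (Submodule.span K (⇑b' '' {j | j ≠ i})) :=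
      ⟨xB, hxspan, rfl⟩
    rw [Submodule.map_span, ← Set.image_comp] at this
    exact this

  intro m a ha
  obtain ⟨b, hb1, hb2⟩ := main m a ha
  exact ⟨b, hb1, hb2⟩
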